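/- Let U ∈ B(X) and V ∈ B(Y) be bounded Banach space operators and suppose U and V are Fredholm with dim ker U = dim ker V and dim coker U = dim coker V. Then U and V are equivalent after extension. -/

import Mathlib

open ContinuousLinearMap

universe u

/-- A witness that `U ⊕ I_{X₀} = E (V ⊕ I_{Y₀}) F` with `E`, `F` invertible. -/
structure EAEWitness {X Y : Type u}
    [NormedAddCommGroup X] [NormedSpace ℂ X]
    [NormedAddCommGroup Y] [NormedSpace ℂ Y]
    (U : X →L[ℂ] X) (V : Y →L[ℂ] Y) : Type (u + 1) where
  X₀ : Type u
  Y₀ : Type u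
  [instNX : NormedAddCommGroup X₀]
  [instSX : NormedSpace ℂ X₀]
  [instCX : CompleteSpace X₀]
  [instNY : NormedAddCommGroup Y₀]
  [instSY : NormedSpace ℂ Y₀]
  [instCY : CompleteSpace Y₀]
  E : (Y × Y₀) ≃L[ℂ] (X × X₀)
  F : (X × X₀) ≃L[ℂ] (Y × Y₀)
  eq : U.prodMap (ContinuousLinearMap.id ℂ X₀) =
    (E : (Y × Y₀) →L[ℂ] (X × X₀)) ∘L (V.prodMap (ContinuousLinearMap.id ℂ Y₀)) ∘L
      (F : (X × X₀) →L[ℂ] (Y × Y₀))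

/-- `U` and `V` are *equivalent after extension*. -/
def EAE {X Y : Type u}
    [NormedAddCommGroup X] [NormedSpace ℂ X]
    [NormedAddCommGroup Y] [NormedSpace ℂ Y]
    (U : X →L[ℂ] X) (V : Y →L[ℂ] Y) : Prop :=
  Nonempty (EAEWitness U V)

/-- A bounded operator is *Fredholm* if it has finite dimensional kernel and
closed range of finite codimension. -/
def IsFredholm {X Y : Type u} [NormedAddCommGroup X] [NormedSpace ℂ X]
    [NormedAddCommGroup Y] [NormedSpace ℂ Y] (T : X →L[ℂ] Y) : Prop :=
  FiniteDimensional ℂ (LinearMap.ker (T : X →ₗ[ℂ] Y)) ∧ IsClosed (LinearMap.range (T : X →ₗ[ℂ] Y) : Set Y) ∧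
    FiniteDimensional ℂ (Y ⧸ LinearMap.range (T : X →ₗ[ℂ] Y))

section Aux

variable {Z : Type u} [NormedAddCommGroup Z] [NormedSpace ℂ Z] [CompleteSpace Z]

set_option linter.unusedSectionVars false

theorem T_ker (T : Z →L[ℂ] Z) (k : LinearMap.ker T.toLinearMap) : T (k : Z) = 0 := LinearMap.mem_ker.1 k.2

/-- Auxiliary data: continuous projections onto the kernel and the range of `T`. -/
structure Decomp (T : Z →L[ℂ] Z) : Type u where
  f : Z →L[ℂ] LinearMap.ker T.toLinearMap
  g : Z →L[ℂ] LinearMap.range T.toLinearMap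
  hf : ∀ k : LinearMap.ker T.toLinearMap, f k = k
  hg : ∀ r : LinearMap.range T.toLinearMap, g r = r

namespace Decomp

variable {T : Z →L[ℂ] Z} (d : Decomp T)

theorem f_ker (m : LinearMap.ker d.f.toLinearMap) : d.f (m : Z) = 0 := LinearMap.mem_ker.1 m.2

theorem g_ker (m : LinearMap.ker d.g.toLinearMap) : d.g (m : Z) = 0 := LinearMap.mem_ker.1 m.2

theorem g_T (z : Z) : (d.g (T z) : Z) = T z :=
  congrArg Subtype.val (d.hg ⟨T z, LinearMap.mem_range_self T.toLinearMap z⟩)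

theorem mem_ker_f (z : Z) : z - (d.f z : Z) ∈ LinearMap.ker d.f.toLinearMap :=
  LinearMap.mem_ker.2 (by rw [map_sub, ContinuousLinearMap.coe_coe, d.hf (d.f z), sub_self])

/-- The continuous projection onto the complement of the range. -/
noncomputable def n : Z →L[ℂ] LinearMap.ker d.g.toLinearMap :=
  (ContinuousLinearMap.id ℂ Z - (LinearMap.range T.toLinearMap).subtypeL.comp d.g).codRestrict
    (LinearMap.ker d.g.toLinearMap) (fun z => LinearMap.mem_ker.2 (by
      simp only [ContinuousLinearMap.sub_apply, ContinuousLinearMap.id_apply,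
        ContinuousLinearMap.comp_apply, Submodule.subtypeL_apply, map_sub]
      rw [ContinuousLinearMap.coe_coe, d.hg (d.g z), sub_self]))

theorem n_apply (z : Z) : (d.n z : Z) = z - (d.g z : Z) := rfl

theorem n_T (z : Z) : d.n (T z) = 0 :=
  Subtype.ext (by rw [n_apply, d.g_T, sub_self]; rfl)

theorem n_n (m : LinearMap.ker d.g.toLinearMap) : d.n (m : Z) = m :=
  Subtype.ext (by
    rw [n_apply]
    have h : (d.g (m : Z) : Z) = 0 := by rw [d.g_ker m]; rfl
    rw [h, sub_zero])

/-- The restriction of `T` to the complement of its kernel, as a map to the range. -/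
noncomputable def isoAux : LinearMap.ker d.f.toLinearMap →L[ℂ] LinearMap.range T.toLinearMap :=
  (T.comp (LinearMap.ker d.f.toLinearMap).subtypeL).codRestrict (LinearMap.range T.toLinearMap)
    (fun m => LinearMap.mem_range_self T.toLinearMap (m : Z))

theorem isoAux_apply (m : LinearMap.ker d.f.toLinearMap) : (d.isoAux m : Z) = T (m : Z) := rfl

theorem isoAux_ker : LinearMap.ker d.isoAux.toLinearMap = ⊥ := by
  rw [LinearMap.ker_eq_bot']
  intro m hm
  have h1 : T (m : Z) = 0 := congrArg Subtype.val hm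
  have h2 : (m : Z) ∈ LinearMap.ker T.toLinearMap := LinearMap.mem_ker.2 h1
  have h3 := d.hf ⟨(m : Z), h2⟩
  have h4 : (⟨(m : Z), h2⟩ : LinearMap.ker T.toLinearMap) = 0 := by
    rw [← h3]
    have : d.f (m : Z) = 0 := d.f_ker m
    rw [this]
  apply Subtype.ext
  simpa using congrArg Subtype.val h4

theorem isoAux_range : LinearMap.range d.isoAux.toLinearMap = ⊤ := by
  rw [LinearMap.range_eq_top]
  intro r
  obtain ⟨z, hz⟩ := LinearMap.mem_range.1 r.2
  refine ⟨⟨z - (d.f z : Z), d.mem_ker_f z⟩, ?_⟩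
  apply Subtype.ext
  show T (z - (d.f z : Z)) = (r : Z)
  rw [map_sub, T_ker T (d.f z), sub_zero]; exact hz

/-- `T` restricted to the complement of the kernel is an isomorphism onto the range. -/
noncomputable def iso (hcl : IsClosed (LinearMap.range T.toLinearMap : Set Z)) :
    LinearMap.ker d.f.toLinearMap ≃L[ℂ] LinearMap.range T.toLinearMap :=
  haveI : CompleteSpace (LinearMap.ker d.f.toLinearMap) :=
    (ContinuousLinearMap.isClosed_ker d.f).completeSpace_coe
  haveI : CompleteSpace (LinearMap.range T.toLinearMap) := hcl.completeSpace_coe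
  ContinuousLinearEquiv.ofBijective d.isoAux d.isoAux_ker d.isoAux_range

theorem iso_apply (hcl : IsClosed (LinearMap.range T.toLinearMap : Set Z)) (m : LinearMap.ker d.f.toLinearMap) :
    (d.iso hcl m : Z) = T (m : Z) := rfl

theorem T_iso_symm (hcl : IsClosed (LinearMap.range T.toLinearMap : Set Z)) (r : LinearMap.range T.toLinearMap) :
    T ((d.iso hcl).symm r : Z) = (r : Z) := by
  have := congrArg Subtype.val ((d.iso hcl).apply_symm_apply r)
  rwa [d.iso_apply] at this

theorem iso_symm_T (hcl : IsClosed (LinearMap.range T.toLinearMap : Set Z)) (z : Z) :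
    ((d.iso hcl).symm (d.g (T z)) : Z) = z - (d.f z : Z) := by
  have h : d.iso hcl ⟨z - (d.f z : Z), d.mem_ker_f z⟩ = d.g (T z) := by
    apply Subtype.ext
    rw [d.iso_apply]
    show T (z - (d.f z : Z)) = (d.g (T z) : Z)
    rw [map_sub, T_ker T (d.f z), sub_zero, d.g_T]
  rw [← h, (d.iso hcl).symm_apply_apply]

/-- The complement of the range is linearly isomorphic to the cokernel. -/
noncomputable def quotEquiv : LinearMap.ker d.g.toLinearMap ≃ₗ[ℂ] (Z ⧸ LinearMap.range T.toLinearMap) := by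
  refine LinearEquiv.ofBijective
    ((LinearMap.range T.toLinearMap).mkQ.comp ((LinearMap.ker d.g.toLinearMap).subtype)) ⟨?_, ?_⟩
  · intro m m' h
    have h2 : (m : Z) - (m' : Z) ∈ LinearMap.range T.toLinearMap := by
      rw [← Submodule.Quotient.eq]
      exact h
    apply Subtype.ext
    have h3 := congrArg Subtype.val (d.hg ⟨(m : Z) - (m' : Z), h2⟩)
    have h4 : d.g ((m : Z) - (m' : Z)) = 0 := by
      rw [map_sub, d.g_ker m, d.g_ker m', sub_zero]
    rw [h4] at h3
    have h5 : ((0 : LinearMap.range T.toLinearMap) : Z) = 0 := rfl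
    rw [h5] at h3
    exact sub_eq_zero.1 h3.symm
  · intro q
    obtain ⟨z, rfl⟩ := Submodule.mkQ_surjective _ q
    refine ⟨d.n z, ?_⟩
    show (LinearMap.range T.toLinearMap).mkQ ((d.n z : Z)) = (LinearMap.range T.toLinearMap).mkQ z
    rw [d.n_apply, map_sub]
    have : (LinearMap.range T.toLinearMap).mkQ ((d.g z : Z)) = 0 :=
      (Submodule.Quotient.mk_eq_zero _).2 (d.g z).2
    rw [this, sub_zero]

theorem finrank_ker_g :
    Module.finrank ℂ (LinearMap.ker d.g.toLinearMap) = Module.finrank ℂ (Z ⧸ LinearMap.range T.toLinearMap) :=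
  d.quotEquiv.finrank_eq

end Decomp

end Aux

set_option maxHeartbeats 2000000 in
/-- Fredholm operators with equal kernel dimensions and equal cokernel dimensions
are equivalent after extension. -/
theorem fredholm_eae
    {X Y : Type u} [NormedAddCommGroup X] [NormedSpace ℂ X] [CompleteSpace X]
    [NormedAddCommGroup Y] [NormedSpace ℂ Y] [CompleteSpace Y]
    (U : X →L[ℂ] X) (V : Y →L[ℂ] Y)
    (hU : _root_.IsFredholm U) (hV : _root_.IsFredholm V)
    (hker : Module.finrank ℂ (LinearMap.ker (U : X →ₗ[ℂ] X)) = Module.finrank ℂ (LinearMap.ker (V : Y →ₗ[ℂ] Y)))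
    (hcoker : Module.finrank ℂ (X ⧸ LinearMap.range (U : X →ₗ[ℂ] X)) =
      Module.finrank ℂ (Y ⧸ LinearMap.range (V : Y →ₗ[ℂ] Y))) :
    EAE U V := by
  classical
  obtain ⟨hkU, hclU, hcoU⟩ := hU
  obtain ⟨hkV, hclV, hcoV⟩ := hV
  haveI := hkU; haveI := hkV; haveI := hcoU; haveI := hcoV
  obtain ⟨fU, hfU⟩ := Submodule.ClosedComplemented.of_finiteDimensional (LinearMap.ker U.toLinearMap)
  obtain ⟨fV, hfV⟩ := Submodule.ClosedComplemented.of_finiteDimensional (LinearMap.ker V.toLinearMap)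
  obtain ⟨gU, hgU⟩ := Submodule.ClosedComplemented.of_quotient_finiteDimensional hclU
  obtain ⟨gV, hgV⟩ := Submodule.ClosedComplemented.of_quotient_finiteDimensional hclV
  let dU : Decomp U := ⟨fU, gU, hfU, hgU⟩
  let dV : Decomp V := ⟨fV, gV, hfV, hgV⟩
  haveI : FiniteDimensional ℂ (LinearMap.ker dU.g.toLinearMap) := dU.quotEquiv.symm.finiteDimensional
  haveI : FiniteDimensional ℂ (LinearMap.ker dV.g.toLinearMap) := dV.quotEquiv.symm.finiteDimensional
  let κ : LinearMap.ker U.toLinearMap ≃L[ℂ] LinearMap.ker V.toLinearMap :=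
    (LinearEquiv.ofFinrankEq _ _ hker).toContinuousLinearEquiv
  have hn : Module.finrank ℂ (LinearMap.ker dU.g.toLinearMap) = Module.finrank ℂ (LinearMap.ker dV.g.toLinearMap) := by
    rw [dU.finrank_ker_g, dV.finrank_ker_g, hcoker]
  let ν : LinearMap.ker dU.g.toLinearMap ≃L[ℂ] LinearMap.ker dV.g.toLinearMap :=
    (LinearEquiv.ofFinrankEq _ _ hn).toContinuousLinearEquiv
  let Uiso := dU.iso hclU
  let Viso := dV.iso hclV
  let fst := ContinuousLinearMap.fst ℂ X Y
  let snd := ContinuousLinearMap.snd ℂ X Y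
  let iKU := (LinearMap.ker U.toLinearMap).subtypeL
  let iKV := (LinearMap.ker V.toLinearMap).subtypeL
  let iNU := (LinearMap.ker dU.g.toLinearMap).subtypeL
  let iNV := (LinearMap.ker dV.g.toLinearMap).subtypeL
  let iMU := (LinearMap.ker dU.f.toLinearMap).subtypeL
  let iMV := (LinearMap.ker dV.f.toLinearMap).subtypeL
  let Fmap : (X × Y) →L[ℂ] (X × Y) :=
    (fst - iKU.comp (dU.f.comp fst)
        + iKU.comp ((κ.symm : LinearMap.ker V.toLinearMap →L[ℂ] LinearMap.ker U.toLinearMap).comp (dV.f.comp snd))).prod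
      (iKV.comp ((κ : LinearMap.ker U.toLinearMap →L[ℂ] LinearMap.ker V.toLinearMap).comp (dU.f.comp fst))
        + (snd - iKV.comp (dV.f.comp snd)))
  have hFmap : ∀ x y, Fmap (x, y) =
      (x - (dU.f x : X) + ((κ.symm (dV.f y) : LinearMap.ker U.toLinearMap) : X),
       ((κ (dU.f x) : LinearMap.ker V.toLinearMap) : Y) + (y - (dV.f y : Y))) := fun x y => rfl
  let Emap : (X × Y) →L[ℂ] (X × Y) :=
    (U.comp fst
        + iNU.comp ((ν.symm : LinearMap.ker dV.g.toLinearMap →L[ℂ] LinearMap.ker dU.g.toLinearMap).comp (dV.n.comp snd))).prod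
      (iKV.comp ((κ : LinearMap.ker U.toLinearMap →L[ℂ] LinearMap.ker V.toLinearMap).comp (dU.f.comp fst))
        + iMV.comp ((Viso.symm : LinearMap.range V.toLinearMap →L[ℂ] LinearMap.ker dV.f.toLinearMap).comp (dV.g.comp snd)))
  let Einv : (X × Y) →L[ℂ] (X × Y) :=
    (iKU.comp ((κ.symm : LinearMap.ker V.toLinearMap →L[ℂ] LinearMap.ker U.toLinearMap).comp (dV.f.comp snd))
        + iMU.comp ((Uiso.symm : LinearMap.range U.toLinearMap →L[ℂ] LinearMap.ker dU.f.toLinearMap).comp (dU.g.comp fst))).prod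
      (iNV.comp ((ν : LinearMap.ker dU.g.toLinearMap →L[ℂ] LinearMap.ker dV.g.toLinearMap).comp (dU.n.comp fst))
        + V.comp snd)
  have hEmap : ∀ x y, Emap (x, y) =
      (U x + ((ν.symm (dV.n y) : LinearMap.ker dU.g.toLinearMap) : X),
       ((κ (dU.f x) : LinearMap.ker V.toLinearMap) : Y) + ((Viso.symm (dV.g y) : LinearMap.ker dV.f.toLinearMap) : Y)) :=
    fun x y => rfl
  have hEinv : ∀ x y, Einv (x, y) =
      (((κ.symm (dV.f y) : LinearMap.ker U.toLinearMap) : X) + ((Uiso.symm (dU.g x) : LinearMap.ker dU.f.toLinearMap) : X),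
       ((ν (dU.n x) : LinearMap.ker dV.g.toLinearMap) : Y) + V y) := fun x y => rfl
  -- F is an involution
  have hFF : ∀ z : X × Y, Fmap (Fmap z) = z := by
    rintro ⟨x, y⟩
    rw [hFmap x y, hFmap]
    have h1 : dU.f (x - (dU.f x : X) + ((κ.symm (dV.f y) : LinearMap.ker U.toLinearMap) : X)) =
        κ.symm (dV.f y) := by
      rw [map_add, map_sub, dU.hf (dU.f x), sub_self, zero_add, dU.hf (κ.symm (dV.f y))]
    have h2 : dV.f (((κ (dU.f x) : LinearMap.ker V.toLinearMap) : Y) + (y - (dV.f y : Y))) =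
        κ (dU.f x) := by
      rw [map_add, map_sub, dV.hf (dV.f y), sub_self, add_zero, dV.hf (κ (dU.f x))]
    rw [h1, h2, κ.symm_apply_apply, κ.apply_symm_apply]
    simp only [Prod.mk.injEq]
    constructor
    · abel
    · abel
  -- E inverse identities
  have hEl : ∀ z : X × Y, Einv (Emap z) = z := by
    rintro ⟨x, y⟩
    rw [hEmap x y, hEinv]
    have h1 : dV.f (((κ (dU.f x) : LinearMap.ker V.toLinearMap) : Y)
        + ((Viso.symm (dV.g y) : LinearMap.ker dV.f.toLinearMap) : Y)) = κ (dU.f x) := by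
      rw [map_add, dV.hf (κ (dU.f x)), dV.f_ker (Viso.symm (dV.g y)), add_zero]
    have h2 : dU.g (U x + ((ν.symm (dV.n y) : LinearMap.ker dU.g.toLinearMap) : X)) = dU.g (U x) := by
      rw [map_add, dU.g_ker (ν.symm (dV.n y)), add_zero]
    have h3 : dU.n (U x + ((ν.symm (dV.n y) : LinearMap.ker dU.g.toLinearMap) : X)) = ν.symm (dV.n y) := by
      rw [map_add, dU.n_T x, zero_add, dU.n_n (ν.symm (dV.n y))]
    have h4 : V (((κ (dU.f x) : LinearMap.ker V.toLinearMap) : Y)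
        + ((Viso.symm (dV.g y) : LinearMap.ker dV.f.toLinearMap) : Y)) = (dV.g y : Y) := by
      rw [map_add, T_ker V (κ (dU.f x)), zero_add, dV.T_iso_symm hclV (dV.g y)]
    rw [h1, h2, h3, h4, κ.symm_apply_apply, ν.apply_symm_apply]
    have h5 : ((Uiso.symm (dU.g (U x)) : LinearMap.ker dU.f.toLinearMap) : X) = x - (dU.f x : X) :=
      dU.iso_symm_T hclU x
    rw [h5, dV.n_apply]
    simp only [Prod.mk.injEq]
    constructor
    · abel
    · abel
  have hEr : ∀ z : X × Y, Emap (Einv z) = z := by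
    rintro ⟨x, y⟩
    rw [hEinv x y, hEmap]
    have h1 : dU.f (((κ.symm (dV.f y) : LinearMap.ker U.toLinearMap) : X)
        + ((Uiso.symm (dU.g x) : LinearMap.ker dU.f.toLinearMap) : X)) = κ.symm (dV.f y) := by
      rw [map_add, dU.hf (κ.symm (dV.f y)), dU.f_ker (Uiso.symm (dU.g x)), add_zero]
    have h2 : U (((κ.symm (dV.f y) : LinearMap.ker U.toLinearMap) : X)
        + ((Uiso.symm (dU.g x) : LinearMap.ker dU.f.toLinearMap) : X)) = (dU.g x : X) := by
      rw [map_add, T_ker U (κ.symm (dV.f y)), zero_add, dU.T_iso_symm hclU (dU.g x)]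
    have h3 : dV.n (((ν (dU.n x) : LinearMap.ker dV.g.toLinearMap) : Y) + V y) = ν (dU.n x) := by
      rw [map_add, dV.n_n (ν (dU.n x)), dV.n_T y, add_zero]
    have h4 : dV.g (((ν (dU.n x) : LinearMap.ker dV.g.toLinearMap) : Y) + V y) = dV.g (V y) := by
      rw [map_add, dV.g_ker (ν (dU.n x)), zero_add]
    rw [h1, h2, h3, h4, κ.apply_symm_apply, ν.symm_apply_apply]
    have h5 : ((Viso.symm (dV.g (V y)) : LinearMap.ker dV.f.toLinearMap) : Y) = y - (dV.f y : Y) :=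
      dV.iso_symm_T hclV y
    rw [h5, dU.n_apply]
    simp only [Prod.mk.injEq]
    constructor
    · abel
    · abel
  let Fcle : (X × Y) ≃L[ℂ] (X × Y) := ContinuousLinearEquiv.equivOfInverse Fmap Fmap hFF hFF
  let Ecle : (X × Y) ≃L[ℂ] (X × Y) := ContinuousLinearEquiv.equivOfInverse Emap Einv hEl hEr
  let Ew : (Y × X) ≃L[ℂ] (X × Y) := (ContinuousLinearEquiv.prodComm ℂ Y X).trans Ecle
  let Fw : (X × Y) ≃L[ℂ] (Y × X) := Fcle.trans (ContinuousLinearEquiv.prodComm ℂ X Y)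
  refine ⟨⟨Y, X, Ew, Fw, ?_⟩⟩
  apply ContinuousLinearMap.ext
  rintro ⟨x, y⟩
  show (U x, y) =
    Emap (x - (dU.f x : X) + ((κ.symm (dV.f y) : LinearMap.ker U.toLinearMap) : X),
      V (((κ (dU.f x) : LinearMap.ker V.toLinearMap) : Y) + (y - (dV.f y : Y))))
  have hVb : V (((κ (dU.f x) : LinearMap.ker V.toLinearMap) : Y) + (y - (dV.f y : Y))) = V y := by
    rw [map_add, T_ker V (κ (dU.f x)), zero_add, map_sub, T_ker V (dV.f y), sub_zero]
  rw [hVb, hEmap]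
  have h1 : dU.f (x - (dU.f x : X) + ((κ.symm (dV.f y) : LinearMap.ker U.toLinearMap) : X)) =
      κ.symm (dV.f y) := by
    rw [map_add, map_sub, dU.hf (dU.f x), sub_self, zero_add, dU.hf (κ.symm (dV.f y))]
  have h2 : U (x - (dU.f x : X) + ((κ.symm (dV.f y) : LinearMap.ker U.toLinearMap) : X)) = U x := by
    rw [map_add, map_sub, T_ker U (dU.f x), sub_zero, T_ker U (κ.symm (dV.f y)), add_zero]
  have h3 : dV.n (V y) = 0 := dV.n_T y
  have h5 : ((Viso.symm (dV.g (V y)) : LinearMap.ker dV.f.toLinearMap) : Y) = y - (dV.f y : Y) :=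
    dV.iso_symm_T hclV y
  rw [h1, h2, h3, h5, κ.apply_symm_apply, map_zero]
  simp only [Prod.mk.injEq, Submodule.coe_zero, add_zero]
  refine ⟨?_, ?_⟩ <;> first | trivial | abel
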